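/- arXiv:2405.13157 — 3 statements merged into one kernel-verified Lean document; each statement's English description precedes it below -/
import Mathlib

section
/- Let c, d, e be small categories. Let F : (e ⥤ Type) ⥤ (c ⥤ Type) be a familial functor with positions F(1) and arities F[I], and let G : (e ⥤ Type) ⥤ (d ⥤ Type) be a familial functor. Define L : (d ⥤ Type) ⥤ (c ⥤ Type) to be the familial functor with the same positions copresheaf F(1) and with arity at a position I given by the d-copresheaf G(F[I]), i.e. L(Y)(C) ≅ Σ_{I ∈ F(1)(C)} Hom_{d ⥤ Type}(G(F[I]), Y). Let u : F ⟶ G ⋙ L be the natural transformation whose component at X sends (I, f : F[I] ⟶ X) to (I, G(f) : G(F[I]) ⟶ G(X)). Then for every familial functor R : (d ⥤ Type) ⥤ (c ⥤ Type), the map sending a natural transformation γ : L ⟶ R to (whiskering of γ with G) ∘ u : F ⟶ G ⋙ R is a bijection Nat(L, R) ≅ Nat(F, G ⋙ R); that is, (L, u) exhibits L as a left Kan extension of F along G within familial functors (the right coclosure ⌈F/G⌉). -/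
namespace Fam
open CategoryTheory Opposite Limits
private lemma sigmaExt {α : Type} {β : α → Type} {a a' : α} {b : β a} {b' : β a'}
    (h : a = a') (h' : HEq b b') : (⟨a, b⟩ : Σ x, β x) = ⟨a', b'⟩ := by
  subst h; cases h'; rfl
variable {c d : Type} [SmallCategory c] [SmallCategory d]
def elHom (pos : c ⥤ Type) {C C' : c} (f : C ⟶ C') (I : pos.obj C) :
    pos.elementsMk C I ⟶ pos.elementsMk C' (pos.map f I) :=
  CategoryOfElements.homMk _ _ f rfl
lemma eqToHom_val {pos : c ⥤ Type} {x y : pos.Elements} (E : x = y) :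
    (eqToHom E).val = eqToHom (congrArg Sigma.fst E) := by
  subst E; simp
@[simps]
def famApply (pos : c ⥤ Type) (ar : pos.Elementsᵒᵖ ⥤ d ⥤ Type) :
    (d ⥤ Type) ⥤ c ⥤ Type where
  obj X :=
    { obj := fun C => Σ I : pos.obj C, ar.obj (op (pos.elementsMk C I)) ⟶ X
      map := fun {C C'} f => TypeCat.ofHom (fun x => ⟨pos.map f x.1, ar.map (elHom pos f x.1).op ≫ x.2⟩)
      map_id := by
        intro C
        ext x : 3
        obtain ⟨I, g⟩ := x
        have h : pos.map (𝟙 C) I = I := by simp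
        have hE : pos.elementsMk C I = pos.elementsMk C (pos.map (𝟙 C) I) := by rw [h]
        have he : elHom pos (𝟙 C) I = eqToHom hE := by
          apply CategoryOfElements.ext
          rw [eqToHom_val]
          simp [elHom]
        dsimp
        refine sigmaExt h ?_
        rw [he]
        simp [eqToHom_op, eqToHom_map]
      map_comp := by
        intro C C' C'' f g
        ext x : 3
        obtain ⟨I, u⟩ := x
        have h : pos.map (f ≫ g) I = pos.map g (pos.map f I) := by simp
        have hE : pos.elementsMk C'' (pos.map (f ≫ g) I)
            = pos.elementsMk C'' (pos.map g (pos.map f I)) := by rw [h]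
        have hcomp : elHom pos f I ≫ elHom pos g (pos.map f I)
            = elHom pos (f ≫ g) I ≫ eqToHom hE := by
          apply CategoryOfElements.ext
          rw [CategoryOfElements.comp_val, CategoryOfElements.comp_val, eqToHom_val]
          simp [elHom]
        dsimp
        refine sigmaExt h ?_
        rw [← Category.assoc, ← ar.map_comp, ← op_comp, hcomp, op_comp, ar.map_comp,
          Category.assoc]
        simp [eqToHom_op, eqToHom_map] }
  map {X Y} t :=
    { app := fun C => TypeCat.ofHom (fun x => ⟨x.1, x.2 ≫ t⟩)
      naturality := by
        intro C C' f
        ext x : 3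
        dsimp
        rw [Category.assoc] }
  map_id := by
    intro X
    apply NatTrans.ext
    ext C x : 4
    dsimp
    rw [Category.comp_id]
  map_comp := by
    intro X Y Z s t
    apply NatTrans.ext
    ext C x : 4
    dsimp
    rw [Category.assoc]

/-- The unit exhibiting `famApply pos (ar ⋙ G)` as the right coclosure `⌈F/G⌉`,
i.e. the left Kan extension of the familial functor `F = famApply pos ar` along `G`. -/
def coclosureUnit {e : Type} [SmallCategory e] (pos : c ⥤ Type)
    (ar : pos.Elementsᵒᵖ ⥤ e ⥤ Type) (G : (e ⥤ Type) ⥤ d ⥤ Type) :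
    famApply pos ar ⟶ G ⋙ famApply pos (ar ⋙ G) where
  app X :=
    { app := fun C => TypeCat.ofHom (fun x => ⟨x.1, G.map x.2⟩)
      naturality := by
        intro C C' f
        ext x : 3
        show (⟨pos.map f x.1, G.map (ar.map (elHom pos f x.1).op ≫ x.2)⟩ :
            Σ I : pos.obj C', (ar ⋙ G).obj (op (pos.elementsMk C' I)) ⟶ G.obj X)
          = ⟨pos.map f x.1, G.map (ar.map (elHom pos f x.1).op) ≫ G.map x.2⟩
        rw [G.map_comp] }
  naturality := by
    intro X Y t
    apply NatTrans.ext
    ext C x : 4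
    show (⟨x.1, G.map (x.2 ≫ t)⟩ :
        Σ I : pos.obj C, (ar ⋙ G).obj (op (pos.elementsMk C I)) ⟶ G.obj Y)
      = ⟨x.1, G.map x.2 ≫ G.map t⟩
    rw [G.map_comp]


section Transpose

variable {e : Type} [SmallCategory e] (posF : c ⥤ Type)
  (arF : posF.Elementsᵒᵖ ⥤ e ⥤ Type) (G : (e ⥤ Type) ⥤ d ⥤ Type)
  (R : (d ⥤ Type) ⥤ c ⥤ Type)

/-- The inverse of `γ ↦ coclosureUnit ≫ Functor.whiskerLeft G γ`. -/
def transpose (δ : famApply posF arF ⟶ G ⋙ R) :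
    famApply posF (arF ⋙ G) ⟶ R where
  app Y :=
    { app := fun C => TypeCat.ofHom (fun x => (R.map x.2).app C
        ((δ.app (arF.obj (op (posF.elementsMk C x.1)))).app C ⟨x.1, 𝟙 _⟩))
      naturality := by
        intro C C' f
        ext x : 3
        obtain ⟨I, g⟩ := x
        show (R.map ((arF ⋙ G).map (elHom posF f I).op ≫ g)).app C'
            ((δ.app (arF.obj (op (posF.elementsMk C' (posF.map f I))))).app C'
              ⟨posF.map f I, 𝟙 _⟩)
          = (R.obj Y).map f ((R.map g).app C
              ((δ.app (arF.obj (op (posF.elementsMk C I)))).app C ⟨I, 𝟙 _⟩))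
        have h4 : (R.map ((arF ⋙ G).map (elHom posF f I).op ≫ g)).app C'
              ((δ.app (arF.obj (op (posF.elementsMk C' (posF.map f I))))).app C'
                ⟨posF.map f I, 𝟙 _⟩)
            = (R.map g).app C' ((R.map (G.map (arF.map (elHom posF f I).op))).app C'
              ((δ.app (arF.obj (op (posF.elementsMk C' (posF.map f I))))).app C'
                ⟨posF.map f I, 𝟙 _⟩)) :=
          ConcreteCategory.congr_hom (congr_app (R.map_comp (G.map (arF.map (elHom posF f I).op)) g) C') _
        have h3 : (δ.app (arF.obj (op (posF.elementsMk C I)))).app C'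
              ⟨posF.map f I, 𝟙 _ ≫ arF.map (elHom posF f I).op⟩
            = (R.map (G.map (arF.map (elHom posF f I).op))).app C'
              ((δ.app (arF.obj (op (posF.elementsMk C' (posF.map f I))))).app C'
                ⟨posF.map f I, 𝟙 _⟩) :=
          ConcreteCategory.congr_hom (congr_app (δ.naturality (arF.map (elHom posF f I).op)) C')
            (⟨posF.map f I, 𝟙 _⟩ :
              ((famApply posF arF).obj (arF.obj (op (posF.elementsMk C' (posF.map f I))))).obj C')
        have h2 : (δ.app (arF.obj (op (posF.elementsMk C I)))).app C'
              ⟨posF.map f I, arF.map (elHom posF f I).op ≫ 𝟙 _⟩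
            = (R.obj (G.obj (arF.obj (op (posF.elementsMk C I))))).map f
              ((δ.app (arF.obj (op (posF.elementsMk C I)))).app C ⟨I, 𝟙 _⟩) :=
          ConcreteCategory.congr_hom ((δ.app (arF.obj (op (posF.elementsMk C I)))).naturality f)
            (⟨I, 𝟙 _⟩ :
              ((famApply posF arF).obj (arF.obj (op (posF.elementsMk C I)))).obj C)
        have h1 : (R.map g).app C'
              ((R.obj (G.obj (arF.obj (op (posF.elementsMk C I))))).map f
                ((δ.app (arF.obj (op (posF.elementsMk C I)))).app C ⟨I, 𝟙 _⟩))
            = (R.obj Y).map f ((R.map g).app C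
                ((δ.app (arF.obj (op (posF.elementsMk C I)))).app C ⟨I, 𝟙 _⟩)) :=
          ConcreteCategory.congr_hom ((R.map g).naturality f) _
        rw [Category.id_comp] at h3
        rw [h4, ← h1, ← h2, Category.comp_id, h3] }
  naturality := by
    intro Y Z t
    apply NatTrans.ext
    ext C x : 4
    obtain ⟨I, g⟩ := x
    show (R.map (g ≫ t)).app C
        ((δ.app (arF.obj (op (posF.elementsMk C I)))).app C ⟨I, 𝟙 _⟩)
      = (R.map t).app C ((R.map g).app C
        ((δ.app (arF.obj (op (posF.elementsMk C I)))).app C ⟨I, 𝟙 _⟩))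
    exact ConcreteCategory.congr_hom (congr_app (R.map_comp g t) C) _

lemma transpose_left_inv (γ : famApply posF (arF ⋙ G) ⟶ R) :
    transpose posF arF G R (coclosureUnit posF arF G ≫ Functor.whiskerLeft G γ) = γ := by
  apply NatTrans.ext
  ext Y : 1
  apply NatTrans.ext
  ext C x : 4
  obtain ⟨I, g⟩ := x
  show (R.map g).app C
      ((γ.app (G.obj (arF.obj (op (posF.elementsMk C I))))).app C
        ⟨I, G.map (𝟙 _)⟩) = (γ.app Y).app C ⟨I, g⟩
  have h1 : (γ.app Y).app C ⟨I, 𝟙 _ ≫ g⟩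
      = (R.map g).app C
        ((γ.app ((arF ⋙ G).obj (op (posF.elementsMk C I)))).app C ⟨I, 𝟙 _⟩) :=
    ConcreteCategory.congr_hom (congr_app (γ.naturality
      (g : (arF ⋙ G).obj (op (posF.elementsMk C I)) ⟶ Y)) C)
      (⟨I, 𝟙 _⟩ : ((famApply posF (arF ⋙ G)).obj _).obj C)
  rw [Category.id_comp] at h1
  rw [G.map_id]
  exact h1.symm

lemma transpose_right_inv (δ : famApply posF arF ⟶ G ⋙ R) :
    coclosureUnit posF arF G ≫ Functor.whiskerLeft G (transpose posF arF G R δ) = δ := by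
  apply NatTrans.ext
  ext X : 1
  apply NatTrans.ext
  ext C x : 4
  obtain ⟨I, f⟩ := x
  show (R.map (G.map f)).app C
      ((δ.app (arF.obj (op (posF.elementsMk C I)))).app C ⟨I, 𝟙 _⟩)
    = (δ.app X).app C ⟨I, f⟩
  have h1 : (δ.app X).app C ⟨I, 𝟙 _ ≫ f⟩
      = (R.map (G.map f)).app C
        ((δ.app (arF.obj (op (posF.elementsMk C I)))).app C ⟨I, 𝟙 _⟩) :=
    ConcreteCategory.congr_hom (congr_app (δ.naturality f) C)
      (⟨I, 𝟙 _⟩ : ((famApply posF arF).obj _).obj C)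
  rw [Category.id_comp] at h1
  rw [← h1]

end Transpose

/-- For familial functors `F : (e ⥤ Type) ⥤ (c ⥤ Type)` (with positions
`posF` and arities `arF`) and `G : (e ⥤ Type) ⥤ (d ⥤ Type)`, the familial functor
`L := famApply posF (arF ⋙ G)` (same positions as `F`, arity `G (F[I])` at `I`) together with
the unit `u : F ⟶ G ⋙ L`, `(I, f) ↦ (I, G.map f)`, exhibits `L` as the left Kan extension of
`F` along `G` relative to familial functors: for every familial `R`, postcomposition
`γ ↦ u ≫ Functor.whiskerLeft G γ` is a bijection `(L ⟶ R) ≃ (F ⟶ G ⋙ R)`. -/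
theorem coclosure_is_leftKanExtension_among_familial
    {c d e : Type} [SmallCategory c] [SmallCategory d] [SmallCategory e]
    (F : (e ⥤ Type) ⥤ c ⥤ Type) (posF : c ⥤ Type)
    (arF : posF.Elementsᵒᵖ ⥤ e ⥤ Type) (eF : famApply posF arF ≅ F)
    (G : (e ⥤ Type) ⥤ d ⥤ Type) (posG : d ⥤ Type)
    (arG : posG.Elementsᵒᵖ ⥤ e ⥤ Type) (eG : famApply posG arG ≅ G)
    (R : (d ⥤ Type) ⥤ c ⥤ Type) (posR : c ⥤ Type)
    (arR : posR.Elementsᵒᵖ ⥤ d ⥤ Type) (eR : famApply posR arR ≅ R) :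
    Function.Bijective (fun γ : famApply posF (arF ⋙ G) ⟶ R =>
      ((eF.inv ≫ coclosureUnit posF arF G) ≫ Functor.whiskerLeft G γ : F ⟶ G ⋙ R)) := by
  have key : Function.Bijective (fun γ : famApply posF (arF ⋙ G) ⟶ R =>
      (coclosureUnit posF arF G ≫ Functor.whiskerLeft G γ : famApply posF arF ⟶ G ⋙ R)) := by
    apply Function.bijective_iff_has_inverse.mpr
    exact ⟨transpose posF arF G R, transpose_left_inv posF arF G R,
      transpose_right_inv posF arF G R⟩
  have pre : Function.Bijective (fun δ : famApply posF arF ⟶ G ⋙ R => eF.inv ≫ δ) := by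
    apply Function.bijective_iff_has_inverse.mpr
    exact ⟨fun δ => eF.hom ≫ δ, fun δ => by simp, fun δ => by simp⟩
  have : (fun γ : famApply posF (arF ⋙ G) ⟶ R =>
      ((eF.inv ≫ coclosureUnit posF arF G) ≫ Functor.whiskerLeft G γ : F ⟶ G ⋙ R))
      = (fun δ : famApply posF arF ⟶ G ⋙ R => eF.inv ≫ δ) ∘
        (fun γ => coclosureUnit posF arF G ≫ Functor.whiskerLeft G γ) := by
    funext γ; simp
  rw [this]
  exact pre.comp key

end Fam
end

section
/- Let P denote the free category monad on the category Quiv of quivers, i.e., the monad induced by the adjunction between the free category functor Quiv ⥤ Cat and the forgetful functor Cat ⥤ Quiv. For n ∈ ℕ, let ⟦n⟧ denote the linear quiver with vertex set {0, 1, ..., n} and exactly one arrow i → i+1 for each 0 ≤ i < n. Then the full subcategory of the Kleisli category of P spanned by the linear quivers ⟦n⟧ for all n ∈ ℕ is equivalent to the simplex category Δ (whose objects are the finite nonempty linear orders [n] and whose morphisms are order-preserving maps). -/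
namespace FreeCatNerve

open CategoryTheory

/-- The vertex set `{0, 1, ..., n}` of the linear quiver `⟦n⟧`. -/
def LinOb (n : ℕ) : Type := Fin (n + 1)

/-- The linear quiver structure: exactly one arrow `i → i + 1` for each `0 ≤ i < n`. -/
instance (n : ℕ) : Quiver.{0} (LinOb n) :=
  ⟨fun i j => PLift ((i : Fin (n + 1)).val + 1 = (j : Fin (n + 1)).val)⟩

/-- The linear quiver `⟦n⟧` as an object of the category `Quiv` of quivers. -/
def linQuiv (n : ℕ) : Quiv.{0, 0} := Quiv.of (LinOb n)

/-- The free category monad `P` on `Quiv`, induced by the adjunction between the free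
category functor `Quiv ⥤ Cat` and the forgetful functor `Cat ⥤ Quiv`. -/
def pathMonad : Monad Quiv.{0, 0} := Quiv.adj.toMonad

/-- The full subcategory of the Kleisli category of the free category monad spanned by the
linear quivers `⟦n⟧`, `n ∈ ℕ`. -/
def ThetaPath : Type :=
  InducedCategory (Kleisli pathMonad) (fun n : ℕ => Kleisli.mk pathMonad (linQuiv n))

instance : Category ThetaPath :=
  inferInstanceAs
    (Category (InducedCategory (Kleisli pathMonad) (fun n : ℕ => Kleisli.mk pathMonad (linQuiv n))))

/-! ### Auxiliary material -/

/-- The value of a vertex of `⟦n⟧` as a natural number. -/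
def lv {n : ℕ} (a : LinOb n) : ℕ := (a : Fin (n + 1)).val

lemma lv_lt {n : ℕ} (a : LinOb n) : lv a < n + 1 := (a : Fin (n + 1)).isLt

lemma lv_ext {n : ℕ} {a b : LinOb n} (h : lv a = lv b) : a = b := Fin.ext h

/-- Construct a vertex of `⟦n⟧` from a natural number. -/
def mkLin {n : ℕ} (i : ℕ) (h : i < n + 1) : LinOb n := (⟨i, h⟩ : Fin (n + 1))

lemma lv_mkLin {n : ℕ} (i : ℕ) (h : i < n + 1) : lv (mkLin (n := n) i h) = i := rfl

/-- Construct an arrow of `⟦n⟧`. -/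
def linHom {n : ℕ} (a b : LinOb n) (h : lv a + 1 = lv b) : a ⟶ b := PLift.up h

lemma hom_spec {n : ℕ} {a b : LinOb n} (e : a ⟶ b) : lv a + 1 = lv b := e.down

lemma le_of_hom {n : ℕ} {a b : LinOb n} (e : a ⟶ b) : lv a ≤ lv b := by
  have := hom_spec e; omega

/-- Each path in a linear quiver increments vertex values by its length. -/
lemma path_len {n : ℕ} {a b : LinOb n} (p : Quiver.Path a b) :
    lv b = lv a + p.length := by
  induction p with
  | nil => rfl
  | cons p e ih =>
    have := hom_spec e
    simp only [Quiver.Path.length_cons]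
    omega

lemma le_of_path {n : ℕ} {a b : LinOb n} (p : Quiver.Path a b) : lv a ≤ lv b := by
  have := path_len p; omega

/-- Paths between fixed endpoints in a linear quiver are unique. -/
lemma path_unique {n : ℕ} {a b : LinOb n} (p q : Quiver.Path a b) : p = q := by
  induction p with
  | nil =>
    cases q with
    | nil => rfl
    | cons q' e' =>
      exfalso
      have h1 := path_len (q'.cons e')
      have h2 := path_len q'
      have h3 := hom_spec e'
      simp only [Quiver.Path.length_cons] at h1
      omega
  | @cons c b p' e ih =>
    cases q with
    | nil =>
      exfalso
      have h1 := path_len (p'.cons e)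
      simp only [Quiver.Path.length_cons] at h1
      omega
    | @cons c' _ q' e' =>
      have hc : c' = c := lv_ext (by have h1 := hom_spec e; have h2 := hom_spec e'; omega)
      subst hc
      obtain ⟨he⟩ := e
      obtain ⟨he'⟩ := e'
      rw [ih q']

/-- The unique path from `a` to `b` when `lv a + k = lv b`. -/
def pathUp {n : ℕ} : ∀ (k : ℕ) (a b : LinOb n), lv a + k = lv b → Quiver.Path a b
  | 0, a, b, h => (lv_ext (by omega) : a = b) ▸ Quiver.Path.nil
  | k + 1, a, b, h =>
    (Quiver.Hom.toPath
      (linHom a (mkLin (lv a + 1) (by have := lv_lt b; omega)) (lv_mkLin _ _).symm)).comp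
    (pathUp k _ b (by rw [lv_mkLin]; omega))

/-- The unique path from `a` to `b` when `a ≤ b`. -/
def pathLe {n : ℕ} (a b : LinOb n) (h : lv a ≤ lv b) : Quiver.Path a b :=
  pathUp (lv b - lv a) a b (by omega)

instance (m : ThetaPath) : Quiver.{0} (LinOb m) :=
  inferInstanceAs (Quiver.{0} (LinOb (show ℕ from m)))

/-- The object map of a morphism of `ThetaPath`, as a map on vertices. -/
abbrev objMap {m n : ThetaPath} (f : m ⟶ n) : LinOb m → LinOb n :=
  fun i => (f.hom.of : Prefunctor (LinOb m) (Paths (LinOb n))).obj i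

lemma objMap_mono {m n : ThetaPath} (f : m ⟶ n) {a b : LinOb m} (h : lv a ≤ lv b) :
    lv (objMap f a) ≤ lv (objMap f b) := by
  have key : ∀ {a b : LinOb m} (_ : Quiver.Path a b), lv (objMap f a) ≤ lv (objMap f b) := by
    intro a b p
    induction p with
    | nil => exact le_refl _
    | cons p' e ih =>
      refine le_trans ih (le_of_path (n := n) ?_)
      exact (f.hom.of : Prefunctor (LinOb m) (Paths (LinOb n))).map e
  exact key (pathLe a b h)

/-- The comparison functor from `ThetaPath` to the simplex category. -/
def toSimplex : ThetaPath ⥤ SimplexCategory where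
  obj n := SimplexCategory.mk n
  map {m n} f := SimplexCategory.mkHom
    ⟨fun i => objMap f i, fun _ _ h => objMap_mono f h⟩
  map_id _ := SimplexCategory.Hom.ext _ _ (OrderHom.ext _ _ (funext fun i => rfl))
  map_comp _ _ := SimplexCategory.Hom.ext _ _ (OrderHom.ext _ _ (funext fun i => rfl))

instance : toSimplex.Faithful where
  map_injective {m n} {f g} h := by
    have hobj : ∀ i : LinOb m, objMap f i = objMap g i := fun i =>
      congrFun (congrArg (fun φ : toSimplex.obj m ⟶ toSimplex.obj n =>
        (DFunLike.coe φ.toOrderHom)) h) i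
    apply InducedCategory.hom_ext; apply Kleisli.hom_ext
    show (f.hom.of : Prefunctor (LinOb m) (Paths (LinOb n))) = g.hom.of
    obtain ⟨⟨⟨fo, fm⟩⟩⟩ := f
    obtain ⟨⟨⟨go, gm⟩⟩⟩ := g
    obtain rfl : fo = go := funext hobj
    dsimp only
    congr 1
    funext a b e
    exact path_unique _ _

instance : toSimplex.Full where
  map_surjective {m n} g := by
    refine ⟨InducedCategory.homMk (Kleisli.Hom.mk (show Prefunctor (LinOb m) (Paths (LinOb n)) from
      { obj := fun i => show LinOb n from g.toOrderHom i
        map := fun {a b} e =>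
          pathLe (n := n) (g.toOrderHom a) (g.toOrderHom b)
            (g.toOrderHom.monotone (Fin.le_def.mpr (le_of_hom e))) })), ?_⟩
    exact SimplexCategory.Hom.ext _ _ (OrderHom.ext _ _ (funext fun i => rfl))

instance : toSimplex.EssSurj where
  mem_essImage X := ⟨X.len, ⟨eqToIso (SimplexCategory.mk_len X)⟩⟩

instance : toSimplex.IsEquivalence where

/-- The full subcategory of the Kleisli category of the free category
monad on `Quiv` spanned by the linear quivers `⟦n⟧` is equivalent to the simplex category
`Δ`. -/
theorem thetaPath_equiv_simplexCategory : Nonempty (ThetaPath ≌ SimplexCategory) := by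
  exact ⟨toSimplex.asEquivalence⟩

end FreeCatNerve
end

section
/- Let E be a real vector space and let s ⊆ E be a convex set. For positive reals x, x' and points c, c' ∈ s, the point (x/(x+x')) • c + (x'/(x+x')) • c' lies in s, and the binary operation on {x : ℝ // 0 < x} × s defined by (x, c) * (x', c') = (x + x', (x/(x+x')) • c + (x'/(x+x')) • c') is associative. Consequently, adjoining an external unit element e (i.e., taking the type Option ({x : ℝ // 0 < x} × s)) with e as two-sided identity yields a monoid structure, the cone monoid C^cone of the convex set s. -/
namespace ConeMonoid

/-- The positive reals. -/
abbrev PosReal : Type := { x : ℝ // 0 < x }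

variable {E : Type*} [AddCommGroup E] [Module ℝ E]

/-- The normalized weighted combination of two points, with positive weights `x, x'`:
`(x/(x+x')) • c + (x'/(x+x')) • c'`. -/
noncomputable def avg (x x' : PosReal) (c c' : E) : E :=
  (x.1 / (x.1 + x'.1)) • c + (x'.1 / (x.1 + x'.1)) • c'

/-- The normalized weighted combination of two points of a convex set stays in the set. -/
theorem avg_mem {s : Set E} (hs : Convex ℝ s) (x x' : PosReal) {c c' : E}
    (hc : c ∈ s) (hc' : c' ∈ s) : avg x x' c c' ∈ s := by
  have hpos : (0 : ℝ) < x.1 + x'.1 := add_pos x.2 x'.2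
  have hsum : x.1 / (x.1 + x'.1) + x'.1 / (x.1 + x'.1) = 1 := by
    rw [← add_div, div_self hpos.ne']
  exact hs hc hc' (div_nonneg x.2.le hpos.le) (div_nonneg x'.2.le hpos.le) hsum

/-- The binary operation on `{x : ℝ // 0 < x} × s`:
`(x, c) * (x', c') = (x + x', (x/(x+x')) • c + (x'/(x+x')) • c')`. -/
noncomputable def coneMul {s : Set E} (hs : Convex ℝ s) :
    (PosReal × s) → (PosReal × s) → (PosReal × s) :=
  fun p q =>
    (⟨p.1.1 + q.1.1, add_pos p.1.2 q.1.2⟩,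
      ⟨avg p.1 q.1 p.2.1 q.2.1, avg_mem hs p.1 q.1 p.2.2 q.2.2⟩)


theorem avg_assoc (x y z : PosReal) (a b c : E) :
    avg ⟨x.1 + y.1, add_pos x.2 y.2⟩ z (avg x y a b) c
      = avg x ⟨y.1 + z.1, add_pos y.2 z.2⟩ a (avg y z b c) := by
  have h1 : (x.1 + y.1) ≠ 0 := (add_pos x.2 y.2).ne'
  have h2 : (y.1 + z.1) ≠ 0 := (add_pos y.2 z.2).ne'
  have h3 : (x.1 + y.1 + z.1) ≠ 0 := (add_pos (add_pos x.2 y.2) z.2).ne'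
  simp only [avg, smul_add, smul_smul]
  rw [show x.1 + (y.1 + z.1) = x.1 + y.1 + z.1 from (add_assoc _ _ _).symm]
  rw [show (x.1 + y.1) / (x.1 + y.1 + z.1) * (x.1 / (x.1 + y.1)) = x.1 / (x.1 + y.1 + z.1) by
        field_simp,
      show (x.1 + y.1) / (x.1 + y.1 + z.1) * (y.1 / (x.1 + y.1)) = y.1 / (x.1 + y.1 + z.1) by
        field_simp,
      show (y.1 + z.1) / (x.1 + y.1 + z.1) * (y.1 / (y.1 + z.1)) = y.1 / (x.1 + y.1 + z.1) by
        field_simp,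
      show (y.1 + z.1) / (x.1 + y.1 + z.1) * (z.1 / (y.1 + z.1)) = z.1 / (x.1 + y.1 + z.1) by
        field_simp]
  abel

theorem coneMul_assoc {s : Set E} (hs : Convex ℝ s) (a b c : PosReal × s) :
    coneMul hs (coneMul hs a b) c = coneMul hs a (coneMul hs b c) := by
  unfold coneMul
  refine Prod.ext (Subtype.ext ?_) (Subtype.ext ?_)
  · exact add_assoc _ _ _
  · exact avg_assoc a.1 b.1 c.1 a.2.1 b.2.1 c.2.1

/-- For a convex set `s` in a real vector space: the normalized weighted
combination of two points of `s` with positive weights lies in `s`; the induced binary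
operation on `{x : ℝ // 0 < x} × s` is associative; and adjoining an external unit element
(the extra element `none` of `Option`) yields a monoid — the cone monoid `C^cone` of `s`. -/
theorem cone_monoid {s : Set E} (hs : Convex ℝ s) :
    (∀ (x x' : PosReal) (c c' : E), c ∈ s → c' ∈ s → avg x x' c c' ∈ s) ∧
    (∀ a b c : PosReal × s,
      coneMul hs (coneMul hs a b) c = coneMul hs a (coneMul hs b c)) ∧
    ∃ mul : Option (PosReal × s) → Option (PosReal × s) → Option (PosReal × s),
      (∀ a, mul none a = a) ∧
      (∀ a, mul a none = a) ∧
      (∀ a b c, mul (mul a b) c = mul a (mul b c)) ∧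
      (∀ a b : PosReal × s, mul (some a) (some b) = some (coneMul hs a b)) := by
  refine ⟨fun x x' c c' hc hc' => avg_mem hs x x' hc hc', coneMul_assoc hs, ?_⟩
  refine ⟨fun a b => match a, b with
    | none, b => b
    | some a, none => some a
    | some a, some b => some (coneMul hs a b), fun a => rfl, ?_, ?_, fun a b => rfl⟩
  · rintro (_|a) <;> rfl
  · rintro (_|a) (_|b) (_|c) <;> simp [coneMul_assoc hs]


end ConeMonoid
end
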